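/- arXiv:2405.10735 — 2 statements merged into one kernel-verified Lean document; each statement's English description precedes it below -/
import Mathlib

section
/- Let U ⊆ ℝ^n be a nonempty closed convex set, f a proper closed convex function, ψ a differentiable 1-strongly convex Bregman generating function with distance D, and x⁺ = argmin_{x ∈ U} [ f(x) − ⟨s, x⟩ + t·D(x, x̄) ]. Then for all x ∈ U: f(x⁺) − f(x) + ⟨s, x − x̄⟩ ≤ t(D(x, x̄) − D(x, x⁺)) + (1/(2t))‖s‖². -/
open Filter Topology InnerProductSpace Set

/-- Directional difference quotients of a differentiable function converge to the
inner product with the gradient. -/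
lemma bregman_aux_slope_tendsto {E : Type*} [NormedAddCommGroup E] [InnerProductSpace ℝ E]
    [CompleteSpace E] {ψ : E → ℝ} {y : E} (hd : DifferentiableAt ℝ ψ y) (v : E) :
    Filter.Tendsto (fun l : ℝ => (ψ (y + l • v) - ψ y) / l) (𝓝[>] (0:ℝ))
      (𝓝 ((inner ℝ (gradient ψ y) v : ℝ))) := by
  have hc : HasDerivAt (fun l : ℝ => y + l • v) v 0 := by
    simpa using ((hasDerivAt_id (0:ℝ)).smul_const v).const_add y
  have hF : HasFDerivAt ψ (fderiv ℝ ψ y) ((fun l : ℝ => y + l • v) 0) := by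
    simpa using hd.hasFDerivAt
  have h2 : HasDerivAt (fun l : ℝ => ψ (y + l • v)) (fderiv ℝ ψ y v) 0 :=
    hF.comp_hasDerivAt 0 hc
  have h3 := hasDerivAt_iff_tendsto_slope.mp h2
  have h4 : Tendsto (slope (fun l : ℝ => ψ (y + l • v)) 0) (𝓝[>] (0:ℝ))
      (𝓝 (fderiv ℝ ψ y v)) :=
    h3.mono_left (nhdsWithin_mono 0 (fun a ha => by simpa using ha.ne'))
  have h5 : (inner ℝ (gradient ψ y) v : ℝ) = fderiv ℝ ψ y v := toDual_symm_apply
  rw [h5]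
  refine h4.congr fun l => ?_
  simp [slope_def_field, div_eq_inv_mul]

theorem bregman_prox_descent
    {n : ℕ} (U : Set (EuclideanSpace ℝ (Fin n)))
    (hUne : U.Nonempty) (hUc : IsClosed U) (hUconv : Convex ℝ U)
    (f : EuclideanSpace ℝ (Fin n) → ℝ) (hf : ConvexOn ℝ U f)
    (ψ : EuclideanSpace ℝ (Fin n) → ℝ) (hdiff : Differentiable ℝ ψ)
    (hsc : StrongConvexOn Set.univ 1 ψ)
    (D : EuclideanSpace ℝ (Fin n) → EuclideanSpace ℝ (Fin n) → ℝ)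
    (hD : ∀ x y, D x y = ψ x - ψ y - (inner ℝ (gradient ψ y) (x - y) : ℝ))
    (xb : EuclideanSpace ℝ (Fin n)) (hxb : xb ∈ U)
    (s : EuclideanSpace ℝ (Fin n)) (t : ℝ) (ht : 0 < t)
    (xp : EuclideanSpace ℝ (Fin n)) (hxp : xp ∈ U)
    (hmin : IsMinOn (fun x => f x - (inner ℝ s x : ℝ) + t * D x xb) U xp) :
    ∀ x ∈ U, f xp - f x + (inner ℝ s (x - xb) : ℝ)
      ≤ t * (D x xb - D x xp) + (1 / (2 * t)) * ‖s‖ ^ 2 := by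
  intro x hx
  set v : EuclideanSpace ℝ (Fin n) := x - xp with hv
  set A : ℝ := inner ℝ (gradient ψ xp) v with hA
  set B : ℝ := inner ℝ (gradient ψ xb) v with hB
  -- Step 1: first-order optimality inequality
  have key1 : 0 ≤ f x - f xp - (inner ℝ s v : ℝ) + t * (A - B) := by
    have htend : Tendsto
        (fun l : ℝ => f x - f xp - (inner ℝ s v : ℝ) + t * ((ψ (xp + l • v) - ψ xp) / l - B))
        (𝓝[>] (0:ℝ)) (𝓝 (f x - f xp - (inner ℝ s v : ℝ) + t * (A - B))) :=
      tendsto_const_nhds.add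
        ((((bregman_aux_slope_tendsto (hdiff xp) v).sub_const B)).const_mul t)
    refine ge_of_tendsto htend ?_
    filter_upwards [Ioc_mem_nhdsGT_of_mem (by constructor <;> norm_num : (0:ℝ) ∈ Ico (0:ℝ) 1)]
      with l hl
    obtain ⟨hl0, hl1⟩ := hl
    have hpt : (1 - l) • xp + l • x = xp + l • v := by rw [hv]; module
    have hxl : xp + l • v ∈ U := by
      rw [← hpt]; exact hUconv hxp hx (by linarith) hl0.le (by ring)
    have hmin' := isMinOn_iff.mp hmin _ hxl
    have hconv : f (xp + l • v) ≤ (1 - l) * f xp + l * f x := by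
      have := hf.2 hxp hx (by linarith : (0:ℝ) ≤ 1 - l) hl0.le (by ring)
      rw [hpt] at this; simpa using this
    have hsxl : (inner ℝ s (xp + l • v) : ℝ) = (inner ℝ s xp : ℝ) + l * (inner ℝ s v : ℝ) := by
      rw [inner_add_right, real_inner_smul_right]
    have hDl : D (xp + l • v) xb = D xp xb + (ψ (xp + l • v) - ψ xp - l * B) := by
      rw [hD, hD, hB]
      have h1 : (xp + l • v) - xb = (xp - xb) + l • v := by module
      rw [h1, inner_add_right, real_inner_smul_right]; ring
    rw [hsxl, hDl, mul_add] at hmin'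
    have base : 0 ≤ l * (f x - f xp) - l * (inner ℝ s v : ℝ)
        + t * (ψ (xp + l • v) - ψ xp - l * B) := by nlinarith [hmin', hconv]
    have heq : (l * (f x - f xp) - l * (inner ℝ s v : ℝ)
        + t * (ψ (xp + l • v) - ψ xp - l * B)) / l
        = f x - f xp - (inner ℝ s v : ℝ) + t * ((ψ (xp + l • v) - ψ xp) / l - B) := by
      field_simp
    have := div_nonneg base hl0.le
    rw [heq] at this
    linarith
  -- Step 2: three-point identity
  have key2 : A - B = D x xb - D x xp - D xp xb := by
    simp only [hD, hA, hB, hv, inner_sub_right]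
    ring
  -- Step 3: strong convexity lower bound on D xp xb
  have key3 : 1 / 2 * ‖xp - xb‖ ^ 2 ≤ D xp xb := by
    set u : EuclideanSpace ℝ (Fin n) := xp - xb with hu
    have hslope := bregman_aux_slope_tendsto (hdiff xb) u
    have hrhs : Tendsto (fun l : ℝ => ψ xp - ψ xb - (1 - l) * (1 / 2 * ‖u‖ ^ 2))
        (𝓝[>] (0:ℝ)) (𝓝 (ψ xp - ψ xb - 1 / 2 * ‖u‖ ^ 2)) := by
      have hcont : Tendsto (fun l : ℝ => ψ xp - ψ xb - (1 - l) * (1 / 2 * ‖u‖ ^ 2))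
          (𝓝 (0:ℝ)) (𝓝 (ψ xp - ψ xb - (1 - 0) * (1 / 2 * ‖u‖ ^ 2))) := by
        apply Continuous.tendsto; fun_prop
      simpa using hcont.mono_left nhdsWithin_le_nhds
    have hle : (inner ℝ (gradient ψ xb) u : ℝ) ≤ ψ xp - ψ xb - 1 / 2 * ‖u‖ ^ 2 := by
      refine le_of_tendsto_of_tendsto hslope hrhs ?_
      filter_upwards [Ioo_mem_nhdsGT_of_mem (by constructor <;> norm_num : (0:ℝ) ∈ Ico (0:ℝ) 1)]
        with l hl
      have h := hsc.2 (Set.mem_univ xp) (Set.mem_univ xb) hl.1.le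
        (by linarith [hl.2] : (0:ℝ) ≤ 1 - l) (by ring)
      have hpt : l • xp + (1 - l) • xb = xb + l • u := by rw [hu]; module
      rw [hpt] at h
      simp only [smul_eq_mul] at h
      have hux : ‖xp - xb‖ = ‖u‖ := by rw [hu]
      rw [hux] at h
      rw [div_le_iff₀ hl.1]
      nlinarith [h]
    rw [hD]
    have hux : xp - xb = u := hu.symm
    rw [hux]
    linarith
  -- Step 4: Cauchy-Schwarz and Young's inequality
  have hcs : (inner ℝ s (xp - xb) : ℝ) ≤ ‖s‖ * ‖xp - xb‖ := real_inner_le_norm s _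
  have hyoung : ‖s‖ * ‖xp - xb‖ ≤ 1 / (2 * t) * ‖s‖ ^ 2 + t / 2 * ‖xp - xb‖ ^ 2 := by
    have h1 : 1 / (2 * t) * ‖s‖ ^ 2 + t / 2 * ‖xp - xb‖ ^ 2 - ‖s‖ * ‖xp - xb‖
        = (‖s‖ - t * ‖xp - xb‖) ^ 2 / (2 * t) := by
      field_simp
      ring
    nlinarith [div_nonneg (sq_nonneg (‖s‖ - t * ‖xp - xb‖)) (by linarith : (0:ℝ) ≤ 2 * t)]
  -- Combine everything
  have hsplit : (inner ℝ s (x - xb) : ℝ) = (inner ℝ s v : ℝ) + (inner ℝ s (xp - xb) : ℝ) := by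
    rw [hv, ← inner_add_right]
    congr 1
    module
  have hDlow : t * (1 / 2 * ‖xp - xb‖ ^ 2) ≤ t * D xp xb :=
    mul_le_mul_of_nonneg_left key3 ht.le
  rw [key2] at key1
  rw [hsplit]
  nlinarith [key1, hDlow, hcs, hyoung]
end

section
/- Let ψ be a 1-strongly convex differentiable function with Bregman distance D, F an L-Lipschitz operator, β ∈ [0,1], and r̄_K = F(x_K) − (1−β)F(x_{K−1}) − βF(x̃_{K−1}) where x̃_{K−1} = (1/q)∑_{j∈J} x_j for an index block J of size q. Then for any x: ⟨r̄_K, x_K − x⟩ ≤ (1−β)L·D(x_K, x_{K−1}) + (βL/q)∑_{j∈J} D(x_K, x_j) + L·D(x, x_K). -/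
lemma sc_grad_bound {d : ℕ} (ψ : EuclideanSpace ℝ (Fin d) → ℝ)
    (hdiff : Differentiable ℝ ψ) (hsc : StrongConvexOn Set.univ 1 ψ)
    (u v : EuclideanSpace ℝ (Fin d)) :
    (inner ℝ (gradient ψ v) (u - v) : ℝ) ≤ ψ u - ψ v - 1/2 * ‖u - v‖^2 := by
  set φ : ℝ → ℝ := fun t => ψ (v + t • (u - v)) with hφdef
  have hc : HasDerivAt (fun s : ℝ => v + s • (u - v)) (u - v) 0 := by
    simpa using ((hasDerivAt_id (0:ℝ)).smul_const (u - v)).const_add v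
  have hFD : HasFDerivAt ψ (InnerProductSpace.toDual ℝ _ (gradient ψ v)) v :=
    (hasGradientAt_iff_hasFDerivAt).1 (hdiff v).hasGradientAt
  have hFD' : HasFDerivAt ψ (InnerProductSpace.toDual ℝ _ (gradient ψ v))
      ((fun s : ℝ => v + s • (u - v)) 0) := by simpa using hFD
  have hφ' : HasDerivAt φ ((inner ℝ (gradient ψ v) (u - v) : ℝ)) 0 := by
    have h := hFD'.comp_hasDerivAt 0 hc
    simpa [InnerProductSpace.toDual_apply_apply, hφdef, Function.comp_def] using h
  have hslope : Filter.Tendsto (slope φ 0) (nhdsWithin 0 (Set.Ioi 0))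
      (nhds ((inner ℝ (gradient ψ v) (u - v) : ℝ))) :=
    (hasDerivAt_iff_tendsto_slope.1 hφ').mono_left
      (nhdsWithin_mono _ (fun t ht => by simpa using ne_of_gt ht))
  have hbound : ∀ᶠ t in nhdsWithin (0:ℝ) (Set.Ioi 0),
      slope φ 0 t ≤ ψ u - ψ v - (1 - t)/2 * ‖u - v‖^2 := by
    filter_upwards [Ioo_mem_nhdsGT_of_mem (Set.mem_Ico.2 ⟨le_refl (0:ℝ), one_pos⟩)]
      with t ht
    obtain ⟨ht0, ht1⟩ := ht
    have hsc2 := hsc.2 (Set.mem_univ u) (Set.mem_univ v)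
      (le_of_lt ht0) (by linarith : (0:ℝ) ≤ 1 - t) (by ring)
    have heq : t • u + (1 - t) • v = v + t • (u - v) := by
      rw [smul_sub, sub_smul, one_smul]; abel
    rw [heq] at hsc2
    have hφt : φ t ≤ t * ψ u + (1 - t) * ψ v - t * (1 - t) * (1/2 * ‖u - v‖^2) := by
      simpa [smul_eq_mul] using hsc2
    have hφ0 : φ 0 = ψ v := by simp [hφdef]
    rw [slope_def_field, hφ0, sub_zero, div_le_iff₀ ht0]
    nlinarith [hφt]
  have hrhs : Filter.Tendsto (fun t : ℝ => ψ u - ψ v - (1 - t)/2 * ‖u - v‖^2)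
      (nhdsWithin (0:ℝ) (Set.Ioi 0)) (nhds (ψ u - ψ v - 1/2 * ‖u - v‖^2)) := by
    have h0 := (Continuous.tendsto (by continuity :
      Continuous (fun t : ℝ => ψ u - ψ v - (1 - t)/2 * ‖u - v‖^2)) 0)
    simpa using h0.mono_left nhdsWithin_le_nhds
  exact le_of_tendsto_of_tendsto hslope hrhs hbound

lemma avg_sq_bound {d : ℕ} (q : ℕ) (hq : 1 ≤ q) (J : Finset ℕ) (hJ : J.card = q)
    (xs : ℕ → EuclideanSpace ℝ (Fin d)) (xK : EuclideanSpace ℝ (Fin d)) :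
    ‖xK - (q : ℝ)⁻¹ • ∑ j ∈ J, xs j‖^2 ≤ (q : ℝ)⁻¹ * ∑ j ∈ J, ‖xK - xs j‖^2 := by
  have hq0 : (0:ℝ) < (q:ℝ) := by exact_mod_cast hq
  have hrw : xK - (q : ℝ)⁻¹ • ∑ j ∈ J, xs j = (q : ℝ)⁻¹ • ∑ j ∈ J, (xK - xs j) := by
    rw [Finset.sum_sub_distrib, smul_sub, Finset.sum_const, hJ,
      ← Nat.cast_smul_eq_nsmul ℝ, smul_smul, inv_mul_cancel₀ hq0.ne', one_smul]
  rw [hrw]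
  have h1 : ‖(q : ℝ)⁻¹ • ∑ j ∈ J, (xK - xs j)‖ ≤ (q : ℝ)⁻¹ * ∑ j ∈ J, ‖xK - xs j‖ := by
    rw [norm_smul, Real.norm_eq_abs, abs_of_pos (by positivity)]
    gcongr
    exact norm_sum_le _ _
  have h2 : (∑ j ∈ J, ‖xK - xs j‖)^2 ≤ (q:ℝ) * ∑ j ∈ J, ‖xK - xs j‖^2 := by
    have := sq_sum_le_card_mul_sum_sq (s := J) (f := fun j => ‖xK - xs j‖)
    simpa [hJ] using this
  have h3 : ‖(q : ℝ)⁻¹ • ∑ j ∈ J, (xK - xs j)‖^2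
      ≤ ((q : ℝ)⁻¹ * ∑ j ∈ J, ‖xK - xs j‖)^2 := by
    apply pow_le_pow_left₀ (norm_nonneg _) h1
  refine h3.trans ?_
  rw [mul_pow]
  calc ((q:ℝ)⁻¹)^2 * (∑ j ∈ J, ‖xK - xs j‖)^2
      ≤ ((q:ℝ)⁻¹)^2 * ((q:ℝ) * ∑ j ∈ J, ‖xK - xs j‖^2) := by
        gcongr
    _ = (q : ℝ)⁻¹ * ∑ j ∈ J, ‖xK - xs j‖^2 := by
        field_simp

set_option maxHeartbeats 1200000 in
theorem momentum_final_term_bound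
    {d : ℕ} (ψ : EuclideanSpace ℝ (Fin d) → ℝ)
    (hdiff : Differentiable ℝ ψ) (hsc : StrongConvexOn Set.univ 1 ψ)
    (D : EuclideanSpace ℝ (Fin d) → EuclideanSpace ℝ (Fin d) → ℝ)
    (hD : ∀ u v, D u v = ψ u - ψ v - (inner ℝ (gradient ψ v) (u - v) : ℝ))
    (F : EuclideanSpace ℝ (Fin d) → EuclideanSpace ℝ (Fin d))
    (L : ℝ) (hL : 0 ≤ L) (hF : LipschitzWith (Real.toNNReal L) F)
    (β : ℝ) (hβ : β ∈ Set.Icc (0 : ℝ) 1)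
    (q : ℕ) (hq : 1 ≤ q) (J : Finset ℕ) (hJ : J.card = q)
    (xs : ℕ → EuclideanSpace ℝ (Fin d))
    (xK xKm xt : EuclideanSpace ℝ (Fin d))
    (hxt : xt = (q : ℝ)⁻¹ • ∑ j ∈ J, xs j)
    (rb : EuclideanSpace ℝ (Fin d))
    (hrb : rb = F xK - (1 - β) • F xKm - β • F xt) :
    ∀ x, (inner ℝ rb (xK - x) : ℝ) ≤
      (1 - β) * L * D xK xKm
      + (β * L / q) * ∑ j ∈ J, D xK (xs j)
      + L * D x xK := by
  intro x
  obtain ⟨hβ0, hβ1⟩ := hβ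
  have hq0 : (0:ℝ) < (q:ℝ) := by exact_mod_cast hq
  have hDlow : ∀ u v, 1/2 * ‖u - v‖^2 ≤ D u v := by
    intro u v
    rw [hD]
    linarith [sc_grad_bound ψ hdiff hsc u v]
  set A := F xK - F xKm with hA
  set B := F xK - F xt with hB
  set w := xK - x with hw
  have hrb2 : rb = (1 - β) • A + β • B := by
    rw [hrb, hA, hB]; module
  have hlip : ∀ u v : EuclideanSpace ℝ (Fin d), ‖F u - F v‖ ≤ L * ‖u - v‖ := by
    intro u v
    have := hF.dist_le_mul u v
    rwa [dist_eq_norm, dist_eq_norm, Real.coe_toNNReal L hL] at this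
  have hIA : (inner ℝ A w : ℝ) ≤ L/2 * ‖xK - xKm‖^2 + L/2 * ‖w‖^2 := by
    have h1 : (inner ℝ A w : ℝ) ≤ ‖A‖ * ‖w‖ := real_inner_le_norm A w
    have h2 : ‖A‖ ≤ L * ‖xK - xKm‖ := hlip xK xKm
    nlinarith [norm_nonneg w, norm_nonneg A, norm_nonneg (xK - xKm),
      sq_nonneg (‖xK - xKm‖ - ‖w‖), mul_le_mul_of_nonneg_right h2 (norm_nonneg w)]
  set S := ∑ j ∈ J, ‖xK - xs j‖^2 with hS
  have hIB : (inner ℝ B w : ℝ) ≤ L/2 * ((q:ℝ)⁻¹ * S) + L/2 * ‖w‖^2 := by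
    have h1 : (inner ℝ B w : ℝ) ≤ ‖B‖ * ‖w‖ := real_inner_le_norm B w
    have h2 : ‖B‖ ≤ L * ‖xK - xt‖ := hlip xK xt
    have h3 : ‖xK - xt‖^2 ≤ (q:ℝ)⁻¹ * S := by
      rw [hxt]; exact avg_sq_bound q hq J hJ xs xK
    nlinarith [norm_nonneg w, norm_nonneg (xK - xt),
      sq_nonneg (‖xK - xt‖ - ‖w‖), mul_le_mul_of_nonneg_right h2 (norm_nonneg w)]
  have hinner : (inner ℝ rb w : ℝ) = (1 - β) * inner ℝ A w + β * inner ℝ B w := by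
    rw [hrb2, inner_add_left, real_inner_smul_left, real_inner_smul_left]
  have t1 : (1 - β) * (inner ℝ A w : ℝ) ≤ (1 - β) * (L/2 * ‖xK - xKm‖^2 + L/2 * ‖w‖^2) :=
    mul_le_mul_of_nonneg_left hIA (by linarith)
  have t2 : β * (inner ℝ B w : ℝ) ≤ β * (L/2 * ((q:ℝ)⁻¹ * S) + L/2 * ‖w‖^2) :=
    mul_le_mul_of_nonneg_left hIB hβ0
  have t3 : (1 - β) * L * (1/2 * ‖xK - xKm‖^2) ≤ (1 - β) * L * D xK xKm :=
    mul_le_mul_of_nonneg_left (hDlow xK xKm) (by nlinarith)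
  have hsum : 1/2 * S ≤ ∑ j ∈ J, D xK (xs j) := by
    rw [hS, Finset.mul_sum]
    exact Finset.sum_le_sum fun j _ => hDlow xK (xs j)
  have t4 : (β * L / q) * (1/2 * S) ≤ (β * L / q) * ∑ j ∈ J, D xK (xs j) :=
    mul_le_mul_of_nonneg_left hsum (by positivity)
  have t5 : L * (1/2 * ‖w‖^2) ≤ L * D x xK := by
    have : 1/2 * ‖w‖^2 ≤ D x xK := by
      rw [hw, norm_sub_rev]; exact hDlow x xK
    exact mul_le_mul_of_nonneg_left this hL
  have he : β * (L/2 * ((q:ℝ)⁻¹ * S)) = (β * L / (q:ℝ)) * (1/2 * S) := by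
    field_simp
  rw [hinner]
  nlinarith [t1, t2, t3, t4, t5, he]
end
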